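/- Let c > 0 and let f be a probability density on [0,c] satisfying 0 < f̲ ≤ f(v) ≤ f̄ for all v ∈ [0,c], and let l ∈ [0,1]. Then for every x ∈ (0,1]: (f̲/f̄)²·g_f(x,l) ≤ g_f((3+l)/4, l). That is, sending signals with the uniform-distribution optimal signal ratio (3+l)/4 achieves a (f̲/f̄)²-fraction of the optimal expected revenue over all signal ratios, for the unknown density f. -/

import Mathlib

open MeasureTheory Set

/-- Expected revenue `g_f(x,l)` of the two-bidder click-through auction with CTR pair
`(1,l)`, i.i.d. values with density `f` on `[0,c]`, and signal ratio `s₂/s₁ = x`. -/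
noncomputable def gRev (c : ℝ) (f : ℝ → ℝ) (x l : ℝ) : ℝ :=
  (∫ v in (0 : ℝ)..c, v * x * (∫ u in (v * x)..c, f u) * f v)
  + l * ∫ v in (0 : ℝ)..(c * x), (v / x) * (∫ u in (v / x)..c, f u) * f v

private lemma poly_int (a b C : ℝ) :
    (∫ v in (0:ℝ)..C, (a * v + b * v ^ 2)) = a * C ^ 2 / 2 + b * C ^ 3 / 3 := by
  rw [intervalIntegral.integral_add
      (Continuous.intervalIntegrable (by fun_prop) _ _)
      (Continuous.intervalIntegrable (by fun_prop) _ _),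
    intervalIntegral.integral_const_mul, intervalIntegral.integral_const_mul,
    integral_id, integral_pow]
  ring

/-- Two-sided constant-density comparison for `gRev`. -/
private lemma gRev_bounds (c : ℝ) (hc : 0 < c) (f : ℝ → ℝ) (flo fhi : ℝ)
    (hflo : 0 < flo)
    (hf_lb : ∀ v ∈ Set.Icc (0 : ℝ) c, flo ≤ f v)
    (hf_ub : ∀ v ∈ Set.Icc (0 : ℝ) c, f v ≤ fhi)
    (hf_int : (∫ v in (0 : ℝ)..c, f v) = 1)
    (l : ℝ) (hl0 : 0 ≤ l) (x : ℝ) (hx0 : 0 < x) (hx1 : x ≤ 1) :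
    flo ^ 2 * (c ^ 3 * ((3 + l) * x / 6 - x ^ 2 / 3)) ≤ gRev c f x l ∧
      gRev c f x l ≤ fhi ^ 2 * (c ^ 3 * ((3 + l) * x / 6 - x ^ 2 / 3)) := by
  have hfhi : 0 < fhi :=
    lt_of_lt_of_le hflo (le_trans (hf_lb 0 ⟨le_refl 0, hc.le⟩) (hf_ub 0 ⟨le_refl 0, hc.le⟩))
  have hfI : IntervalIntegrable f volume 0 c := by
    by_contra h
    rw [intervalIntegral.integral_undef h] at hf_int
    norm_num at hf_int
  have hfI' : IntegrableOn f (Icc 0 c) volume :=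
    (intervalIntegrable_iff_integrableOn_Icc_of_le hc.le).mp hfI
  have hFcont : ContinuousOn (fun t => ∫ u in t..c, f u) (Icc 0 c) := by
    have := intervalIntegral.continuousOn_primitive_interval_left (μ := volume)
      (a := (0:ℝ)) (b := c) (f := f) (by rwa [uIcc_of_le hc.le])
    rwa [uIcc_of_le hc.le] at this
  have hfsub : ∀ t ∈ Icc (0:ℝ) c, IntervalIntegrable f volume t c := fun t ht =>
    hfI.mono_set (by
      rw [uIcc_of_le ht.2, uIcc_of_le hc.le]
      exact Icc_subset_Icc ht.1 le_rfl)
  have hFub : ∀ t ∈ Icc (0:ℝ) c, (∫ u in t..c, f u) ≤ fhi * (c - t) := by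
    intro t ht
    have h := intervalIntegral.integral_mono_on (f := f) (g := fun _ => fhi) ht.2
      (hfsub t ht) intervalIntegrable_const
      (fun u hu => hf_ub u ⟨le_trans ht.1 hu.1, hu.2⟩)
    simpa [mul_comm] using h
  have hFlb : ∀ t ∈ Icc (0:ℝ) c, flo * (c - t) ≤ (∫ u in t..c, f u) := by
    intro t ht
    have h := intervalIntegral.integral_mono_on (f := fun _ => flo) (g := f) ht.2
      intervalIntegrable_const (hfsub t ht)
      (fun u hu => hf_lb u ⟨le_trans ht.1 hu.1, hu.2⟩)
    simpa [mul_comm] using h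
  have hmap1 : ∀ v ∈ Icc (0:ℝ) c, v * x ∈ Icc (0:ℝ) c := by
    intro v hv
    exact ⟨mul_nonneg hv.1 hx0.le,
      le_trans (by nlinarith [hv.1] : v * x ≤ v) hv.2⟩
  have hmap2 : ∀ v ∈ Icc (0:ℝ) (c * x), v / x ∈ Icc (0:ℝ) c := by
    intro v hv
    exact ⟨div_nonneg hv.1 hx0.le, (div_le_iff₀ hx0).mpr (by linarith [hv.2])⟩
  have hcx : 0 ≤ c * x := mul_nonneg hc.le hx0.le
  have hcxc : c * x ≤ c := by nlinarith
  -- continuity of the multiplicative factors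
  have hcont1 : ContinuousOn (fun v => v * x * (∫ u in v * x..c, f u)) (uIcc (0:ℝ) c) := by
    rw [uIcc_of_le hc.le]
    exact (continuousOn_id.mul continuousOn_const).mul
      (hFcont.comp ((continuous_id.mul continuous_const).continuousOn) hmap1)
  have hcont2 : ContinuousOn (fun v => v / x * (∫ u in v / x..c, f u)) (uIcc (0:ℝ) (c * x)) := by
    rw [uIcc_of_le hcx]
    exact ((continuous_id.div_const x).continuousOn).mul
      (hFcont.comp ((continuous_id.div_const x).continuousOn) hmap2)
  have hint1 : IntervalIntegrable (fun v => v * x * (∫ u in v * x..c, f u) * f v) volume 0 c :=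
    hfI.continuousOn_mul hcont1
  have hfI2 : IntervalIntegrable f volume 0 (c * x) :=
    hfI.mono_set (by rw [uIcc_of_le hcx, uIcc_of_le hc.le]; exact Icc_subset_Icc le_rfl hcxc)
  have hint2 : IntervalIntegrable (fun v => v / x * (∫ u in v / x..c, f u) * f v) volume 0 (c * x) :=
    hfI2.continuousOn_mul hcont2
  -- pointwise bounds for the first integrand
  have hb1 : ∀ v ∈ Icc (0:ℝ) c,
      flo * (v * x * (c - v * x)) * flo ≤ v * x * (∫ u in v * x..c, f u) * f v ∧
      v * x * (∫ u in v * x..c, f u) * f v ≤ fhi * (v * x * (c - v * x)) * fhi := by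
    intro v hv
    have hvx := hmap1 v hv
    have h1 := hFlb _ hvx
    have h2 := hFub _ hvx
    have hfv1 := hf_lb v hv
    have hfv2 := hf_ub v hv
    have hvx0 : 0 ≤ v * x := hvx.1
    have hsub : 0 ≤ c - v * x := by linarith [hvx.2]
    have hF0 : 0 ≤ (∫ u in v * x..c, f u) := le_trans (by positivity) h1
    constructor
    · calc flo * (v * x * (c - v * x)) * flo
          = v * x * (flo * (c - v * x)) * flo := by ring
        _ ≤ v * x * (∫ u in v * x..c, f u) * f v := by
            apply mul_le_mul _ hfv1 hflo.le (mul_nonneg hvx0 hF0)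
            exact mul_le_mul_of_nonneg_left h1 hvx0
    · calc v * x * (∫ u in v * x..c, f u) * f v
          ≤ v * x * (fhi * (c - v * x)) * fhi := by
            apply mul_le_mul _ hfv2 (le_trans hflo.le hfv1)
              (mul_nonneg hvx0 (mul_nonneg hfhi.le hsub))
            exact mul_le_mul_of_nonneg_left h2 hvx0
        _ = fhi * (v * x * (c - v * x)) * fhi := by ring
  -- pointwise bounds for the second integrand
  have hb2 : ∀ v ∈ Icc (0:ℝ) (c * x),
      flo * (v / x * (c - v / x)) * flo ≤ v / x * (∫ u in v / x..c, f u) * f v ∧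
      v / x * (∫ u in v / x..c, f u) * f v ≤ fhi * (v / x * (c - v / x)) * fhi := by
    intro v hv
    have hvx := hmap2 v hv
    have h1 := hFlb _ hvx
    have h2 := hFub _ hvx
    have hv' : v ∈ Icc (0:ℝ) c := ⟨hv.1, le_trans hv.2 hcxc⟩
    have hfv1 := hf_lb v hv'
    have hfv2 := hf_ub v hv'
    have hvx0 : 0 ≤ v / x := hvx.1
    have hsub : 0 ≤ c - v / x := by linarith [hvx.2]
    have hF0 : 0 ≤ (∫ u in v / x..c, f u) := le_trans (by positivity) h1
    constructor
    · calc flo * (v / x * (c - v / x)) * flo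
          = v / x * (flo * (c - v / x)) * flo := by ring
        _ ≤ v / x * (∫ u in v / x..c, f u) * f v := by
            apply mul_le_mul _ hfv1 hflo.le (mul_nonneg hvx0 hF0)
            exact mul_le_mul_of_nonneg_left h1 hvx0
    · calc v / x * (∫ u in v / x..c, f u) * f v
          ≤ v / x * (fhi * (c - v / x)) * fhi := by
            apply mul_le_mul _ hfv2 (le_trans hflo.le hfv1)
              (mul_nonneg hvx0 (mul_nonneg hfhi.le hsub))
            exact mul_le_mul_of_nonneg_left h2 hvx0
        _ = fhi * (v / x * (c - v / x)) * fhi := by ring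
  -- polynomial integrals
  have hp1 : ∀ h : ℝ, (∫ v in (0:ℝ)..c, h * (v * x * (c - v * x)) * h)
      = h ^ 2 * (x * c ^ 3 / 2 - x ^ 2 * c ^ 3 / 3) := by
    intro h
    have : (fun v : ℝ => h * (v * x * (c - v * x)) * h)
        = fun v => (h * x * c * h) * v + (-(h * x ^ 2 * h)) * v ^ 2 := by
      funext v; ring
    rw [this, poly_int]
    ring
  have hp2 : ∀ h : ℝ, (∫ v in (0:ℝ)..(c * x), h * (v / x * (c - v / x)) * h)
      = h ^ 2 * (c ^ 3 * x / 6) := by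
    intro h
    have : (fun v : ℝ => h * (v / x * (c - v / x)) * h)
        = fun v => (h * c / x * h) * v + (-(h / x ^ 2 * h)) * v ^ 2 := by
      funext v; field_simp; ring
    rw [this, poly_int]
    field_simp
    ring
  have hpc1 : ∀ h : ℝ, IntervalIntegrable (fun v => h * (v * x * (c - v * x)) * h) volume 0 c :=
    fun h => (Continuous.intervalIntegrable (by fun_prop) _ _)
  have hpc2 : ∀ h : ℝ,
      IntervalIntegrable (fun v => h * (v / x * (c - v / x)) * h) volume 0 (c * x) :=
    fun h => (Continuous.intervalIntegrable (by fun_prop) _ _)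
  -- integral comparisons
  have hI1lb := intervalIntegral.integral_mono_on hc.le (hpc1 flo) hint1
    (fun v hv => (hb1 v hv).1)
  have hI1ub := intervalIntegral.integral_mono_on hc.le hint1 (hpc1 fhi)
    (fun v hv => (hb1 v hv).2)
  have hI2lb := intervalIntegral.integral_mono_on hcx (hpc2 flo) hint2
    (fun v hv => (hb2 v hv).1)
  have hI2ub := intervalIntegral.integral_mono_on hcx hint2 (hpc2 fhi)
    (fun v hv => (hb2 v hv).2)
  rw [hp1 flo] at hI1lb
  rw [hp1 fhi] at hI1ub
  rw [hp2 flo] at hI2lb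
  rw [hp2 fhi] at hI2ub
  unfold gRev
  constructor
  · have := mul_le_mul_of_nonneg_left hI2lb hl0
    nlinarith [this, hI1lb]
  · have := mul_le_mul_of_nonneg_left hI2ub hl0
    nlinarith [this, hI1ub]

/-- For a density `f` on `[0,c]` with `0 < f̲ ≤ f ≤ f̄`, sending signals with the
uniform-distribution optimal signal ratio `(3+l)/4` achieves a `(f̲/f̄)²`-fraction of
the expected revenue of any signal ratio `x ∈ (0,1]`. -/
theorem uniform_ratio_prior_free_approx (c : ℝ) (hc : 0 < c) (f : ℝ → ℝ) (flo fhi : ℝ)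
    (hflo : 0 < flo)
    (hf_lb : ∀ v ∈ Set.Icc (0 : ℝ) c, flo ≤ f v)
    (hf_ub : ∀ v ∈ Set.Icc (0 : ℝ) c, f v ≤ fhi)
    (hf_int : (∫ v in (0 : ℝ)..c, f v) = 1)
    (l : ℝ) (hl : l ∈ Set.Icc (0 : ℝ) 1) :
    ∀ x ∈ Set.Ioc (0 : ℝ) 1,
      (flo / fhi) ^ 2 * gRev c f x l ≤ gRev c f ((3 + l) / 4) l := by
  obtain ⟨hl0, hl1⟩ := hl
  intro x hx
  obtain ⟨hx0, hx1⟩ := hx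
  have hfhi : 0 < fhi :=
    lt_of_lt_of_le hflo (le_trans (hf_lb 0 ⟨le_refl 0, hc.le⟩) (hf_ub 0 ⟨le_refl 0, hc.le⟩))
  have hxs0 : (0:ℝ) < (3 + l) / 4 := by linarith
  have hxs1 : (3 + l) / 4 ≤ 1 := by linarith
  have h1 := gRev_bounds c hc f flo fhi hflo hf_lb hf_ub hf_int l hl0 x hx0 hx1
  have h2 := gRev_bounds c hc f flo fhi hflo hf_lb hf_ub hf_int l hl0 ((3 + l) / 4) hxs0 hxs1
  have hΦ : (3 + l) * x / 6 - x ^ 2 / 3 ≤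
      (3 + l) * ((3 + l) / 4) / 6 - ((3 + l) / 4) ^ 2 / 3 := by
    nlinarith [sq_nonneg ((3 + l) / 4 - x)]
  have hΦ' : flo ^ 2 * (c ^ 3 * ((3 + l) * x / 6 - x ^ 2 / 3)) ≤
      flo ^ 2 * (c ^ 3 * ((3 + l) * ((3 + l) / 4) / 6 - ((3 + l) / 4) ^ 2 / 3)) := by
    have hc3 : (0:ℝ) ≤ c ^ 3 := by positivity
    exact mul_le_mul_of_nonneg_left (mul_le_mul_of_nonneg_left hΦ hc3) (by positivity)
  have hratio : (flo / fhi) ^ 2 * (fhi ^ 2 * (c ^ 3 * ((3 + l) * x / 6 - x ^ 2 / 3)))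
      = flo ^ 2 * (c ^ 3 * ((3 + l) * x / 6 - x ^ 2 / 3)) := by
    field_simp
  calc (flo / fhi) ^ 2 * gRev c f x l
      ≤ (flo / fhi) ^ 2 * (fhi ^ 2 * (c ^ 3 * ((3 + l) * x / 6 - x ^ 2 / 3))) := by
        apply mul_le_mul_of_nonneg_left h1.2 (by positivity)
    _ = flo ^ 2 * (c ^ 3 * ((3 + l) * x / 6 - x ^ 2 / 3)) := hratio
    _ ≤ flo ^ 2 * (c ^ 3 * ((3 + l) * ((3 + l) / 4) / 6 - ((3 + l) / 4) ^ 2 / 3)) := hΦ'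
    _ ≤ gRev c f ((3 + l) / 4) l := h2.1
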